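/- Let J be a convex body in ℝ^d and I a finite subset of ℤ^d containing extreme points in ℤ^d. A point u of J belongs to the inner boundary ∂⁻_I J = J \ (J ⊖ I) if and only if there exists v ∈ ex(I) such that u + v ∉ J. Consequently, if 𝖩 = conv(J ∩ ℤ^d), then the integer points of ∂⁻_I 𝖩 coincide with the integer points of ∂⁻_I J, i.e. ∂⁻_I 𝖩 ∩ ℤ^d = ∂⁻_I J ∩ ℤ^d. -/

import Mathlib

open Set

/-- The lattice points: points of `ℝ^d` with all coordinates integers. -/
def IsLatticePt {d : ℕ} (x : EuclideanSpace ℝ (Fin d)) : Prop :=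
  ∀ i, ∃ n : ℤ, x i = (n : ℝ)

/-- Erosion `J ⊖ I = {x | ∀ i ∈ I, x + i ∈ J}`. -/
def erode {d : ℕ} (J I : Set (EuclideanSpace ℝ (Fin d))) : Set (EuclideanSpace ℝ (Fin d)) :=
  {x | ∀ i ∈ I, x + i ∈ J}

/-- Inner morphological boundary `∂⁻_I J = J \ (J ⊖ I)`. -/
def innerBd {d : ℕ} (J I : Set (EuclideanSpace ℝ (Fin d))) : Set (EuclideanSpace ℝ (Fin d)) :=
  J \ erode J I

lemma latticePt_add {d : ℕ} {x y : EuclideanSpace ℝ (Fin d)}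
    (hx : IsLatticePt x) (hy : IsLatticePt y) : IsLatticePt (x + y) := by
  intro i
  obtain ⟨n, hn⟩ := hx i
  obtain ⟨m, hm⟩ := hy i
  exact ⟨n + m, by simp [hn, hm]⟩

theorem stmt0 {d : ℕ} (J I : Set (EuclideanSpace ℝ (Fin d)))
    (hJc : IsCompact J) (hJconv : Convex ℝ J)
    (hIfin : I.Finite) (hIlat : ∀ v ∈ I, IsLatticePt v) :
    (∀ u ∈ J, (u ∈ innerBd J I ↔
        ∃ v ∈ Set.extremePoints ℝ (convexHull ℝ I), u + v ∉ J)) ∧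
    innerBd (convexHull ℝ (J ∩ {u | IsLatticePt u})) I ∩ {u | IsLatticePt u}
      = innerBd J I ∩ {u | IsLatticePt u} := by
  constructor
  · intro u hu
    constructor
    · rintro ⟨-, hne⟩
      simp only [erode, Set.mem_setOf_eq, not_forall] at hne
      obtain ⟨i, hiI, hiJ⟩ := hne
      by_contra hc
      push_neg at hc
      apply hiJ
      have hK : IsCompact (convexHull ℝ I) := hIfin.isCompact_convexHull (𝕜 := ℝ)
      have hex : Set.Finite ((convexHull ℝ I).extremePoints ℝ) :=
        hIfin.subset extremePoints_convexHull_subset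
      have hclosed : IsClosed (convexHull ℝ ((convexHull ℝ I).extremePoints ℝ)) :=
        (hex.isCompact_convexHull (𝕜 := ℝ)).isClosed
      have hKM := closure_convexHull_extremePoints hK (convex_convexHull ℝ I)
      rw [hclosed.closure_eq] at hKM
      have hi : i ∈ convexHull ℝ ((convexHull ℝ I).extremePoints ℝ) := by
        rw [hKM]; exact subset_convexHull ℝ I hiI
      have hsub : convexHull ℝ ((convexHull ℝ I).extremePoints ℝ)
          ⊆ (fun v => u + v) ⁻¹' J :=
        convexHull_min (fun v hv => hc v hv) (hJconv.translate_preimage_right u)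
      exact hsub hi
    · rintro ⟨v, hv, hvJ⟩
      exact ⟨hu, fun h => hvJ (h v (extremePoints_convexHull_subset hv))⟩
  · have hKsub : convexHull ℝ (J ∩ {u | IsLatticePt u}) ⊆ J :=
      convexHull_min Set.inter_subset_left hJconv
    have key : ∀ x : EuclideanSpace ℝ (Fin d), IsLatticePt x →
        (x ∈ convexHull ℝ (J ∩ {u | IsLatticePt u}) ↔ x ∈ J) := by
      intro x hx
      exact ⟨fun h => hKsub h,
        fun h => subset_convexHull ℝ _ ⟨h, hx⟩⟩
    ext u
    simp only [Set.mem_inter_iff, Set.mem_setOf_eq, innerBd, erode, Set.mem_diff,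
      Set.mem_setOf_eq]
    constructor
    · rintro ⟨⟨huK, hne⟩, hulat⟩
      refine ⟨⟨(key u hulat).1 huK, fun h => hne fun i hi => ?_⟩, hulat⟩
      exact (key _ (latticePt_add hulat (hIlat i hi))).2 (h i hi)
    · rintro ⟨⟨huJ, hne⟩, hulat⟩
      refine ⟨⟨(key u hulat).2 huJ, fun h => hne fun i hi => ?_⟩, hulat⟩
      exact (key _ (latticePt_add hulat (hIlat i hi))).1 (h i hi)
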